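/- Let n ≥ 2 and let M be a symmetric linear endomorphism of the Euclidean space ℝⁿ with eigenvalues λ_1 < ⋯ < λ_n and orthonormal eigenvectors e_1, …, e_n. Let 1 ≤ k ≤ n − 1 and let c ∈ ℝ satisfy λ_k < c < λ_{k+1}. Let E_k denote the linear span of {e_1, …, e_k}. Then the subsphere E_k ∩ S^{n−1} = {x : ‖x‖ = 1 ∧ x ∈ E_k} is contained in the sublevel set A_c = {x : ‖x‖ = 1 ∧ ⟪x, M x⟫ ≤ c}, and the inclusion map E_k ∩ S^{n−1} ↪ A_c is a homotopy equivalence. -/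

import Mathlib

open RealInnerProductSpace

set_option maxHeartbeats 1000000

/-- For `λ_k < c < λ_{k+1}` (1-indexed), the subsphere of the span `E_k` of the first
`k` eigenvectors is contained in the sublevel set `A_c = {x : ‖x‖ = 1 ∧ ⟪x, M x⟫ ≤ c}`,
and the inclusion `E_k ∩ S^{n-1} ↪ A_c` is a homotopy equivalence. -/
theorem subsphere_inclusion_homotopy_equiv (n : ℕ) (hn : 2 ≤ n)
    (M : EuclideanSpace ℝ (Fin n) →ₗ[ℝ] EuclideanSpace ℝ (Fin n))
    (hM : ∀ x y : EuclideanSpace ℝ (Fin n), ⟪M x, y⟫ = ⟪x, M y⟫)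
    (lam : Fin n → ℝ) (hlam : StrictMono lam)
    (e : Fin n → EuclideanSpace ℝ (Fin n)) (he : Orthonormal ℝ e)
    (heig : ∀ i, M (e i) = lam i • e i)
    (k : ℕ) (hk1 : 1 ≤ k) (hk2 : k ≤ n - 1)
    (c : ℝ) (hc1 : lam ⟨k - 1, by omega⟩ < c) (hc2 : c < lam ⟨k, by omega⟩) :
    (∀ x : EuclideanSpace ℝ (Fin n), ‖x‖ = 1 →
        x ∈ Submodule.span ℝ (e '' {j : Fin n | (j : ℕ) < k}) → ⟪x, M x⟫ ≤ c)
      ∧ ∃ h : ContinuousMap.HomotopyEquiv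
            {x : EuclideanSpace ℝ (Fin n) // ‖x‖ = 1 ∧
              x ∈ Submodule.span ℝ (e '' {j : Fin n | (j : ℕ) < k})}
            {x : EuclideanSpace ℝ (Fin n) // ‖x‖ = 1 ∧ ⟪x, M x⟫ ≤ c},
          ∀ x, ((h.toFun x : {x : EuclideanSpace ℝ (Fin n) // ‖x‖ = 1 ∧
              ⟪x, M x⟫ ≤ c}) : EuclideanSpace ℝ (Fin n)) = (x : EuclideanSpace ℝ (Fin n)) := by
  classical
  haveI : Nonempty (Fin n) := ⟨⟨0, by omega⟩⟩
  have hspan : Submodule.span ℝ (Set.range e) = ⊤ :=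
    he.linearIndependent.span_eq_top_of_card_eq_finrank (by simp)
  set b : OrthonormalBasis (Fin n) ℝ (EuclideanSpace ℝ (Fin n)) :=
    OrthonormalBasis.mk he hspan.ge with hbdef
  have hb : ∀ i, b i = e i := fun i => by simp [hbdef]
  have quad : ∀ x : EuclideanSpace ℝ (Fin n), ⟪x, M x⟫ = ∑ i, lam i * ⟪e i, x⟫ ^ 2 := by
    intro x
    rw [← b.sum_inner_mul_inner x (M x)]
    refine Finset.sum_congr rfl fun i _ => ?_
    rw [hb, ← hM, heig, real_inner_smul_left, real_inner_comm x (e i)]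
    ring
  have normsq : ∀ x : EuclideanSpace ℝ (Fin n), ‖x‖ ^ 2 = ∑ i, ⟪e i, x⟫ ^ 2 := by
    intro x
    rw [← real_inner_self_eq_norm_sq, ← b.sum_inner_mul_inner x x]
    refine Finset.sum_congr rfl fun i _ => ?_
    rw [hb, real_inner_comm x (e i)]
    ring
  set E : Submodule ℝ (EuclideanSpace ℝ (Fin n)) :=
    Submodule.span ℝ (e '' {j : Fin n | (j : ℕ) < k}) with hEdef
  have hMemE : ∀ x ∈ E, ∀ j : Fin n, k ≤ (j : ℕ) → ⟪e j, x⟫ = 0 := by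
    intro x hx j hj
    have hle : E ≤ LinearMap.ker ((innerSL ℝ (e j) : EuclideanSpace ℝ (Fin n) →ₗ[ℝ] ℝ)) := by
      rw [hEdef]
      refine Submodule.span_le.2 ?_
      rintro _ ⟨i, hi, rfl⟩
      have hne : j ≠ i := by
        rintro rfl
        simp only [Set.mem_setOf_eq] at hi
        omega
      simpa using he.2 hne
    simpa using hle hx
  have hMemPerp : ∀ x ∈ Eᗮ, ∀ j : Fin n, (j : ℕ) < k → ⟪e j, x⟫ = 0 := by
    intro x hx j hj
    exact hx (e j) (Submodule.subset_span ⟨j, hj, rfl⟩)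
  have fact1 : ∀ u ∈ E, ⟪u, M u⟫ ≤ lam ⟨k - 1, by omega⟩ * ‖u‖ ^ 2 := by
    intro u hu
    rw [quad, normsq, Finset.mul_sum]
    refine Finset.sum_le_sum fun i _ => ?_
    by_cases hik : (i : ℕ) < k
    · have : lam i ≤ lam ⟨k - 1, by omega⟩ := hlam.le_iff_le.2 (by simp [Fin.le_def]; omega)
      nlinarith [sq_nonneg ⟪e i, u⟫]
    · rw [hMemE u hu i (le_of_not_gt hik)]; simp
  have fact2 : ∀ v ∈ Eᗮ, lam ⟨k, by omega⟩ * ‖v‖ ^ 2 ≤ ⟪v, M v⟫ := by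
    intro v hv
    rw [quad, normsq, Finset.mul_sum]
    refine Finset.sum_le_sum fun i _ => ?_
    by_cases hik : (i : ℕ) < k
    · rw [hMemPerp v hv i hik]; simp
    · have : lam ⟨k, by omega⟩ ≤ lam i := hlam.le_iff_le.2 (by simp [Fin.le_def]; omega)
      nlinarith [sq_nonneg ⟪e i, v⟫]
  have hMapsE : ∀ u ∈ E, M u ∈ E := by
    intro u hu
    have hle : E.map M ≤ E := by
      rw [hEdef, Submodule.map_span]
      refine Submodule.span_le.2 ?_
      rintro _ ⟨_, ⟨i, hi, rfl⟩, rfl⟩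
      rw [heig]
      exact Submodule.smul_mem _ _ (Submodule.subset_span ⟨i, hi, rfl⟩)
    exact hle ⟨u, hu, rfl⟩
  have cross : ∀ u ∈ E, ∀ v ∈ Eᗮ, ⟪u, M v⟫ = 0 ∧ ⟪v, M u⟫ = 0 := by
    intro u hu v hv
    have h1 : ⟪M u, v⟫ = 0 := hv (M u) (hMapsE u hu)
    exact ⟨by rw [← hM]; exact h1, by rw [real_inner_comm]; exact h1⟩
  have decomp : ∀ u ∈ E, ∀ v ∈ Eᗮ, ∀ s : ℝ,
      ⟪u + s • v, M (u + s • v)⟫ = ⟪u, M u⟫ + s ^ 2 * ⟪v, M v⟫ ∧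
      ‖u + s • v‖ ^ 2 = ‖u‖ ^ 2 + s ^ 2 * ‖v‖ ^ 2 := by
    intro u hu v hv s
    have hsv : s • v ∈ Eᗮ := Submodule.smul_mem _ _ hv
    obtain ⟨c1, c2⟩ := cross u hu (s • v) hsv
    have hperp : ⟪u, s • v⟫ = 0 := real_inner_comm u (s • v) ▸ hsv u hu
    constructor
    · rw [map_add, inner_add_left, inner_add_right, inner_add_right, c1, c2]
      rw [map_smul, real_inner_smul_left, real_inner_smul_right]
      ring
    · rw [norm_add_sq_real, hperp, norm_smul]
      simp [mul_pow]
  haveI : CompleteSpace E := FiniteDimensional.complete ℝ E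
  set P : EuclideanSpace ℝ (Fin n) → EuclideanSpace ℝ (Fin n) :=
    fun x => (E.orthogonalProjectionOnto x : EuclideanSpace ℝ (Fin n)) with hPdef
  have hPmem : ∀ x, P x ∈ E := fun x => (E.orthogonalProjectionOnto x).2
  have hVmem : ∀ x, x - P x ∈ Eᗮ := fun x => Submodule.sub_starProjection_mem_orthogonal (K := E) x
  have hPcont : Continuous P :=
    continuous_subtype_val.comp (E.orthogonalProjectionOnto).continuous
  have hPself : ∀ x ∈ E, P x = x := fun x hx => Submodule.starProjection_eq_self_iff.2 hx
  have hPne : ∀ x, ‖x‖ = 1 → ⟪x, M x⟫ ≤ c → P x ≠ 0 := by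
    intro x hx hxc h0
    have hxperp : x ∈ Eᗮ := Submodule.orthogonalProjectionOnto_eq_zero_iff.1 (Subtype.ext h0)
    have := fact2 x hxperp
    rw [hx] at this
    nlinarith
  have key : ∀ x, ‖x‖ = 1 → ⟪x, M x⟫ ≤ c → ∀ s : ℝ, 0 ≤ s → s ≤ 1 →
      ⟪P x + s • (x - P x), M (P x + s • (x - P x))⟫ ≤
        c * ‖P x + s • (x - P x)‖ ^ 2 := by
    intro x hx hxc s hs0 hs1
    obtain ⟨hq, hn2⟩ := decomp (P x) (hPmem x) (x - P x) (hVmem x) s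
    obtain ⟨hq1, hn1⟩ := decomp (P x) (hPmem x) (x - P x) (hVmem x) 1
    simp only [one_smul, one_pow, one_mul, add_sub_cancel] at hq1 hn1
    have hA : ⟪P x, M (P x)⟫ - c * ‖P x‖ ^ 2 ≤ 0 := by
      have := fact1 (P x) (hPmem x)
      nlinarith [sq_nonneg ‖P x‖]
    have hAB : (⟪P x, M (P x)⟫ - c * ‖P x‖ ^ 2) +
        (⟪x - P x, M (x - P x)⟫ - c * ‖x - P x‖ ^ 2) ≤ 0 := by
      have h1 : ⟪x, M x⟫ = ⟪P x, M (P x)⟫ + ⟪x - P x, M (x - P x)⟫ := by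
        rw [← hq1]
      have h2 : (1 : ℝ) = ‖P x‖ ^ 2 + ‖x - P x‖ ^ 2 := by
        rw [← hn1, hx]; norm_num
      have h3 : c * ‖P x‖ ^ 2 + c * ‖x - P x‖ ^ 2 = c := by
        have := congrArg (fun t => c * t) h2.symm
        simpa [mul_add] using this
      linarith
    have h1 : s ^ 2 * ((⟪P x, M (P x)⟫ - c * ‖P x‖ ^ 2) +
        (⟪x - P x, M (x - P x)⟫ - c * ‖x - P x‖ ^ 2)) ≤ 0 :=
      mul_nonpos_of_nonneg_of_nonpos (sq_nonneg s) hAB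
    have h2 : (1 - s ^ 2) * (⟪P x, M (P x)⟫ - c * ‖P x‖ ^ 2) ≤ 0 :=
      mul_nonpos_of_nonneg_of_nonpos (by nlinarith [sq_nonneg s, sq_nonneg (1 - s)]) hA
    rw [hq, hn2]
    linarith [h1, h2]
  -- the sphere bound for points of E
  have incl_bound : ∀ x : EuclideanSpace ℝ (Fin n), ‖x‖ = 1 → x ∈ E → ⟪x, M x⟫ ≤ c := by
    intro x hx hxE
    have h := fact1 x hxE
    rw [hx, one_pow, mul_one] at h
    exact h.trans hc1.le
  refine ⟨incl_bound, ?_⟩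
  -- nonvanishing along the homotopy
  have hgne : ∀ (t : ℝ) (x : EuclideanSpace ℝ (Fin n)), ‖x‖ = 1 → ⟪x, M x⟫ ≤ c →
      P x + t • (x - P x) ≠ 0 := by
    intro t x h1 h2 h0
    have hn2 := (decomp (P x) (hPmem x) (x - P x) (hVmem x) t).2
    rw [h0] at hn2
    simp only [norm_zero] at hn2
    have h3 : ‖P x‖ = 0 := by
      refine le_antisymm ?_ (norm_nonneg _)
      nlinarith [sq_nonneg (t * ‖x - P x‖), norm_nonneg (P x), sq_nonneg ‖x - P x‖,
        mul_nonneg (sq_nonneg t) (sq_nonneg ‖x - P x‖)]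
    exact hPne x h1 h2 (norm_eq_zero.1 h3)
  -- value of the quadratic form on the normalized homotopy point
  have hval : ∀ (t : ℝ) (x : EuclideanSpace ℝ (Fin n)), ‖x‖ = 1 → ⟪x, M x⟫ ≤ c →
      0 ≤ t → t ≤ 1 →
      ⟪‖P x + t • (x - P x)‖⁻¹ • (P x + t • (x - P x)),
        M (‖P x + t • (x - P x)‖⁻¹ • (P x + t • (x - P x)))⟫ ≤ c := by
    intro t x h1 h2 ht0 ht1
    set g := P x + t • (x - P x) with hg
    have hgnz : g ≠ 0 := hgne t x h1 h2
    have hgpos : 0 < ‖g‖ := norm_pos_iff.2 hgnz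
    have hkey := key x h1 h2 t ht0 ht1
    rw [← hg] at hkey
    have heq : ⟪‖g‖⁻¹ • g, M (‖g‖⁻¹ • g)⟫ = ‖g‖⁻¹ * (‖g‖⁻¹ * ⟪g, M g⟫) := by
      rw [map_smul, real_inner_smul_left, real_inner_smul_right]
    rw [heq]
    have h4 : ‖g‖⁻¹ * (‖g‖⁻¹ * ⟪g, M g⟫) ≤ ‖g‖⁻¹ * (‖g‖⁻¹ * (c * ‖g‖ ^ 2)) := by
      have hinv : (0:ℝ) ≤ ‖g‖⁻¹ := by positivity
      exact mul_le_mul_of_nonneg_left (mul_le_mul_of_nonneg_left hkey hinv) hinv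
    have h5 : ‖g‖⁻¹ * (‖g‖⁻¹ * (c * ‖g‖ ^ 2)) = c := by
      field_simp
    linarith
  -- the inclusion map
  set incl : C({x : EuclideanSpace ℝ (Fin n) // ‖x‖ = 1 ∧ x ∈ E},
      {x : EuclideanSpace ℝ (Fin n) // ‖x‖ = 1 ∧ ⟪x, M x⟫ ≤ c}) :=
    ⟨fun x => ⟨x.1, x.2.1, incl_bound x.1 x.2.1 x.2.2⟩,
      Continuous.subtype_mk continuous_subtype_val _⟩ with hincl
  -- the retraction
  have hrcont : Continuous fun x : {x : EuclideanSpace ℝ (Fin n) // ‖x‖ = 1 ∧ ⟪x, M x⟫ ≤ c} =>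
      ‖P x.1‖⁻¹ • P x.1 := by
    have hc : Continuous fun x : {x : EuclideanSpace ℝ (Fin n) // ‖x‖ = 1 ∧ ⟪x, M x⟫ ≤ c} =>
        P x.1 := hPcont.comp continuous_subtype_val
    exact (hc.norm.inv₀ fun x =>
      norm_ne_zero_iff.2 (hPne x.1 x.2.1 x.2.2)).smul hc
  set r : C({x : EuclideanSpace ℝ (Fin n) // ‖x‖ = 1 ∧ ⟪x, M x⟫ ≤ c},
      {x : EuclideanSpace ℝ (Fin n) // ‖x‖ = 1 ∧ x ∈ E}) :=
    ⟨fun x => ⟨‖P x.1‖⁻¹ • P x.1,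
      norm_smul_inv_norm (hPne x.1 x.2.1 x.2.2),
      Submodule.smul_mem _ _ (hPmem x.1)⟩,
      Continuous.subtype_mk hrcont _⟩ with hr
  -- r ∘ incl = id
  have hri : r.comp incl = ContinuousMap.id _ := by
    ext x : 1
    apply Subtype.ext
    show ‖P x.1‖⁻¹ • P x.1 = x.1
    rw [hPself x.1 x.2.2, x.2.1]
    simp
  -- homotopy from incl ∘ r to id
  have hHcont : Continuous fun p : (unitInterval ×
      {x : EuclideanSpace ℝ (Fin n) // ‖x‖ = 1 ∧ ⟪x, M x⟫ ≤ c}) =>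
      ‖P p.2.1 + (p.1 : ℝ) • (p.2.1 - P p.2.1)‖⁻¹ •
        (P p.2.1 + (p.1 : ℝ) • (p.2.1 - P p.2.1)) := by
    have cx : Continuous fun p : (unitInterval ×
        {x : EuclideanSpace ℝ (Fin n) // ‖x‖ = 1 ∧ ⟪x, M x⟫ ≤ c}) =>
        (p.2.1 : EuclideanSpace ℝ (Fin n)) := continuous_subtype_val.comp continuous_snd
    have ct : Continuous fun p : (unitInterval ×
        {x : EuclideanSpace ℝ (Fin n) // ‖x‖ = 1 ∧ ⟪x, M x⟫ ≤ c}) =>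
        (p.1 : ℝ) := continuous_subtype_val.comp continuous_fst
    have cg : Continuous fun p : (unitInterval ×
        {x : EuclideanSpace ℝ (Fin n) // ‖x‖ = 1 ∧ ⟪x, M x⟫ ≤ c}) =>
        P p.2.1 + (p.1 : ℝ) • (p.2.1 - P p.2.1) :=
      (hPcont.comp cx).add (ct.smul (cx.sub (hPcont.comp cx)))
    exact ((cg.norm.inv₀ fun p =>
      norm_ne_zero_iff.2 (hgne (p.1 : ℝ) p.2.1 p.2.2.1 p.2.2.2)).smul cg)
  set H : ContinuousMap.Homotopy (incl.comp r) (ContinuousMap.id _) :=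
    { toFun := fun p => ⟨‖P p.2.1 + (p.1 : ℝ) • (p.2.1 - P p.2.1)‖⁻¹ •
          (P p.2.1 + (p.1 : ℝ) • (p.2.1 - P p.2.1)),
        norm_smul_inv_norm (hgne (p.1 : ℝ) p.2.1 p.2.2.1 p.2.2.2),
        hval (p.1 : ℝ) p.2.1 p.2.2.1 p.2.2.2 p.1.2.1 p.1.2.2⟩
      continuous_toFun := Continuous.subtype_mk hHcont _
      map_zero_left := by
        intro x
        apply Subtype.ext
        show ‖P x.1 + (0:ℝ) • (x.1 - P x.1)‖⁻¹ • (P x.1 + (0:ℝ) • (x.1 - P x.1)) =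
          ‖P x.1‖⁻¹ • P x.1
        simp
      map_one_left := by
        intro x
        apply Subtype.ext
        show ‖P x.1 + (1:ℝ) • (x.1 - P x.1)‖⁻¹ • (P x.1 + (1:ℝ) • (x.1 - P x.1)) = x.1
        rw [one_smul, add_sub_cancel, x.2.1]
        simp } with hH
  exact ⟨⟨incl, r, hri ▸ ContinuousMap.Homotopic.refl _, ⟨H⟩⟩, fun x => rfl⟩
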